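/- Let Z ~ N(0,1), α > 0, a ∈ ℝ, and define Ψ_a(σ²) = E[(F^α(a + σZ) - a)²] where F^α is projection onto [-α,α]. Then Ψ_a(σ²) = σ² + (ᾱ² - σ²)Q(ᾱ/σ) + (α̃² - σ²)Q(α̃/σ) - (σ/√(2π))·ᾱ·e^{-ᾱ²/(2σ²)} - (σ/√(2π))·α̃·e^{-α̃²/(2σ²)}, where ᾱ = α - a, α̃ = α + a, and Q(x) = ∫_x^∞ (1/√(2π)) e^{-u²/2} du, assuming |a| ≤ α and σ > 0. -/

import Mathlib

open ProbabilityTheory MeasureTheory Real Set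
open scoped NNReal ENNReal

noncomputable def phi (u : ℝ) : ℝ := (1 / Real.sqrt (2 * Real.pi)) * Real.exp (-u ^ 2 / 2)

lemma phi_cont : Continuous phi := by unfold phi; fun_prop

lemma phi_nonneg (u : ℝ) : 0 ≤ phi u := by unfold phi; positivity

lemma phi_int : Integrable phi := by
  unfold phi
  refine Integrable.const_mul ?_ _
  have : ∀ x : ℝ, Real.exp (-x ^ 2 / 2) = Real.exp (-(2⁻¹ : ℝ) * x ^ 2) := fun x => by ring_nf
  simp_rw [this]
  exact integrable_exp_neg_mul_sq (by norm_num)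

lemma phi_total : ∫ u, phi u = 1 := by
  unfold phi
  rw [integral_const_mul]
  have : ∀ x : ℝ, Real.exp (-x ^ 2 / 2) = Real.exp (-(2⁻¹ : ℝ) * x ^ 2) := fun x => by ring_nf
  simp_rw [this, integral_gaussian]
  have h2 : Real.pi / (2⁻¹ : ℝ) = 2 * Real.pi := by field_simp
  rw [h2, one_div, inv_mul_cancel₀ (by positivity)]

lemma phi_even (u : ℝ) : phi (-u) = phi u := by unfold phi; rw [neg_pow]; ring_nf

lemma gauss_int (g : ℝ → ℝ) : (∫ z, g z ∂(gaussianReal 0 1)) = ∫ z, phi z * g z := by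
  rw [gaussianReal_of_var_ne_zero 0 one_ne_zero]
  have h : (gaussianPDF 0 1) = fun x => ((Real.toNNReal (gaussianPDFReal 0 1 x) : ℝ≥0) : ℝ≥0∞) :=
    rfl
  rw [h, integral_withDensity_eq_integral_smul ((measurable_gaussianPDFReal 0 1).real_toNNReal) g]
  congr 1; ext x
  rw [NNReal.smul_def, Real.coe_toNNReal _ (gaussianPDFReal_nonneg _ _ _)]
  simp only [smul_eq_mul]
  congr 1
  simp [gaussianPDFReal, phi]

lemma phi_hasDeriv (z : ℝ) : HasDerivAt phi (phi z * (-z)) z := by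
  have h1 : HasDerivAt (fun z : ℝ => -z ^ 2 / 2) (-z) z := by
    have := ((hasDerivAt_pow 2 z).neg).div_const 2
    simpa using this.congr_deriv (by ring)
  have h2 := h1.exp
  have h3 := h2.const_mul (1 / Real.sqrt (2 * Real.pi))
  unfold phi
  exact h3.congr_deriv (by ring)

/-- Closed form of the per-symbol MSE of the clipping denoiser:
Ψ_a(σ²) = E[(F^α(a+σZ)-a)²] equals the explicit Gaussian-tail expression,
where Q(x) = ∫_x^∞ (1/√(2π))e^{-u²/2} du, ᾱ = α - a, α̃ = α + a. -/
theorem stmt_7 (α a σ : ℝ) (hα : 0 < α) (ha : |a| ≤ α) (hσ : 0 < σ)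
    (Q : ℝ → ℝ)
    (hQ : ∀ x, Q x = ∫ u in Set.Ioi x, (1 / Real.sqrt (2 * Real.pi)) * Real.exp (-u ^ 2 / 2)) :
    (∫ z, (max (-α) (min α (a + σ * z)) - a) ^ 2 ∂(gaussianReal 0 1)) =
      σ ^ 2 + ((α - a) ^ 2 - σ ^ 2) * Q ((α - a) / σ)
        + ((α + a) ^ 2 - σ ^ 2) * Q ((α + a) / σ)
        - σ / Real.sqrt (2 * Real.pi) * (α - a) * Real.exp (-(α - a) ^ 2 / (2 * σ ^ 2))
        - σ / Real.sqrt (2 * Real.pi) * (α + a) * Real.exp (-(α + a) ^ 2 / (2 * σ ^ 2)) := by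
  obtain ⟨ha1, ha2⟩ := abs_le.mp ha
  have hσ' : σ ≠ 0 := ne_of_gt hσ
  have hQ' : ∀ x, Q x = ∫ u in Set.Ioi x, phi u := fun x => hQ x
  set f : ℝ → ℝ := fun z => (max (-α) (min α (a + σ * z)) - a) ^ 2 with hf
  set c1 : ℝ := -((α + a) / σ) with hc1
  set c2 : ℝ := (α - a) / σ with hc2
  have hc1le : c1 ≤ 0 := by
    rw [hc1]; simp only [neg_nonpos]; exact div_nonneg (by linarith) hσ.le
  have hc2ge : (0:ℝ) ≤ c2 := by rw [hc2]; exact div_nonneg (by linarith) hσ.le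
  have hc12 : c1 ≤ c2 := le_trans hc1le hc2ge
  have hσc1 : σ * c1 = -(α + a) := by rw [hc1]; field_simp
  have hσc2 : σ * c2 = α - a := by rw [hc2]; field_simp
  have hfmeas : Continuous f := by rw [hf]; fun_prop
  have hfbd : ∀ z, |f z| ≤ (2*α)^2 := by
    intro z
    rw [hf]
    simp only []
    set M := max (-α) (min α (a + σ * z)) with hM
    have h1 : -α ≤ M := le_max_left _ _
    have h2 : M ≤ α := max_le (by linarith) (min_le_left _ _)
    rw [abs_of_nonneg (sq_nonneg _)]
    nlinarith [mul_nonneg (by linarith : (0:ℝ) ≤ α - M) (by linarith : (0:ℝ) ≤ α + M),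
      mul_nonneg (by linarith : (0:ℝ) ≤ α - a) (by linarith : (0:ℝ) ≤ α + a),
      sq_nonneg (M + a)]
  have hInt : Integrable (fun z => phi z * f z) := by
    have h := phi_int.bdd_mul hfmeas.aestronglyMeasurable (c := (2*α)^2) (Filter.Eventually.of_forall fun z => hfbd z)
    have he : (fun z => phi z * f z) = f * phi := by funext z; simp [mul_comm]
    rw [he]; exact h
  -- Iic integral of phi equals Q((α+a)/σ)
  have hiic : ∫ z in Iic c1, phi z = Q ((α + a) / σ) := by
    have h := integral_comp_neg_Ioi (-c1) phi
    simp_rw [phi_even, neg_neg] at h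
    rw [← h, hQ' ((α + a) / σ), hc1, neg_neg]
  -- split the integral
  rw [gauss_int f, ← intervalIntegral.integral_Iic_add_Ioi (b := c1) hInt.integrableOn
      hInt.integrableOn,
    ← Ioc_union_Ioi_eq_Ioi hc12,
    setIntegral_union (Ioc_disjoint_Ioi le_rfl) measurableSet_Ioi hInt.integrableOn
      hInt.integrableOn]
  -- piece 1 : Iic c1
  have hP1 : ∫ z in Iic c1, phi z * f z = (α + a)^2 * Q ((α + a) / σ) := by
    have he : ∀ z ∈ Iic c1, phi z * f z = phi z * (α + a)^2 := by
      intro z hz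
      simp only [mem_Iic] at hz
      have h1 : a + σ * z ≤ -α := by nlinarith [hσc1]
      have h2 : min α (a + σ * z) = a + σ * z := min_eq_right (by linarith)
      have h3 : max (-α) (a + σ * z) = -α := max_eq_left h1
      rw [hf]; simp only [h2, h3]; ring
    rw [setIntegral_congr_fun measurableSet_Iic he, integral_mul_const, hiic, mul_comm]
  -- piece 3 : Ioi c2
  have hP3 : ∫ z in Ioi c2, phi z * f z = (α - a)^2 * Q ((α - a) / σ) := by
    have he : ∀ z ∈ Ioi c2, phi z * f z = phi z * (α - a)^2 := by
      intro z hz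
      simp only [mem_Ioi] at hz
      have h1 : α ≤ a + σ * z := by nlinarith [hσc2]
      have h2 : min α (a + σ * z) = α := min_eq_left h1
      have h3 : max (-α) α = α := max_eq_right (by linarith)
      rw [hf]; simp only [h2, h3]
    rw [setIntegral_congr_fun measurableSet_Ioi he, integral_mul_const]
    rw [hQ' ((α - a) / σ), ← hc2]; ring
  -- Q at c1
  have hQc1 : Q c1 = 1 - Q ((α + a)/σ) := by
    have hsplit : (∫ z in Iic c1, phi z) + ∫ z in Ioi c1, phi z = 1 := by
      rw [intervalIntegral.integral_Iic_add_Ioi phi_int.integrableOn phi_int.integrableOn,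
        phi_total]
    rw [hQ' c1, ← hsplit, hiic]; ring
  have hIocphi : ∫ z in Ioc c1 c2, phi z = Q c1 - Q c2 := by
    have h : (∫ z in Ioc c1 c2, phi z) + ∫ z in Ioi c2, phi z = ∫ z in Ioi c1, phi z := by
      rw [← setIntegral_union (Ioc_disjoint_Ioi le_rfl) measurableSet_Ioi phi_int.integrableOn
        phi_int.integrableOn, Ioc_union_Ioi_eq_Ioi hc12]
    rw [hQ' c1, hQ' c2, ← h]; ring
  -- FTC for the middle part
  have hderiv : ∀ z : ℝ, HasDerivAt (fun z => -σ^2 * z * phi z)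
      (phi z * (σ * z)^2 - σ^2 * phi z) z := by
    intro z
    have h1 := ((hasDerivAt_id z).const_mul (-σ^2)).mul (phi_hasDeriv z)
    exact h1.congr_deriv (by simp only [id_eq, mul_one]; ring)
  have hcont1 : Continuous (fun z : ℝ => phi z * (σ * z)^2 - σ^2 * phi z) := by
    have := phi_cont; fun_prop
  have hcont2 : Continuous (fun z : ℝ => phi z * (σ * z)^2) := by
    have := phi_cont; fun_prop
  have hmid : ∫ z in Ioc c1 c2, phi z * f z
      = (-σ^2 * c2 * phi c2) - (-σ^2 * c1 * phi c1) + σ^2 * (Q c1 - Q c2) := by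
    have he : ∀ z ∈ Ioc c1 c2, phi z * f z = phi z * (σ * z)^2 := by
      intro z hz
      obtain ⟨hz1, hz2⟩ := hz
      have h1 : -α ≤ a + σ * z := by nlinarith [hσc1]
      have h2 : a + σ * z ≤ α := by nlinarith [hσc2]
      have h3 : min α (a + σ * z) = a + σ * z := min_eq_right h2
      have h4 : max (-α) (a + σ * z) = a + σ * z := max_eq_right h1
      rw [hf]; simp only [h3, h4]; ring
    rw [setIntegral_congr_fun measurableSet_Ioc he, ← intervalIntegral.integral_of_le hc12]
    have hftc : ∫ z in c1..c2, (phi z * (σ * z)^2 - σ^2 * phi z)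
        = (-σ^2 * c2 * phi c2) - (-σ^2 * c1 * phi c1) :=
      intervalIntegral.integral_eq_sub_of_hasDerivAt (fun z _ => hderiv z)
        (hcont1.intervalIntegrable _ _)
    have hsub : ∫ z in c1..c2, (phi z * (σ * z)^2 - σ^2 * phi z)
        = (∫ z in c1..c2, phi z * (σ * z)^2) - σ^2 * ∫ z in c1..c2, phi z := by
      rw [intervalIntegral.integral_sub (hcont2.intervalIntegrable _ _)
        (by have hc : Continuous fun z => σ^2 * phi z := continuous_const.mul phi_cont; exact hc.intervalIntegrable _ _),
        intervalIntegral.integral_const_mul]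
    have hphiIoc : ∫ z in c1..c2, phi z = Q c1 - Q c2 := by
      rw [intervalIntegral.integral_of_le hc12, hIocphi]
    rw [hsub, hphiIoc] at hftc
    linarith
  -- evaluate phi at c1, c2
  have harg2 : -((α - a) / σ) ^ 2 / 2 = -(α - a)^2 / (2 * σ^2) := by
    rw [div_pow]; ring
  have harg1 : -((α + a) / σ) ^ 2 / 2 = -(α + a)^2 / (2 * σ^2) := by
    rw [div_pow]; ring
  have hphic2 : phi c2
      = (1 / Real.sqrt (2 * Real.pi)) * Real.exp (-(α - a) ^ 2 / (2 * σ ^ 2)) := by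
    rw [hc2]; unfold phi; rw [harg2]
  have hphic1 : phi c1
      = (1 / Real.sqrt (2 * Real.pi)) * Real.exp (-(α + a) ^ 2 / (2 * σ ^ 2)) := by
    rw [hc1, phi_even]; unfold phi; rw [harg1]
  rw [hP1, hP3, hmid, hQc1, hphic2, hphic1, hc1, hc2]
  have hS : Real.sqrt (2 * Real.pi) ≠ 0 := by positivity
  field_simp
  ring
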